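/- Let a₁ : ℂ → ℂ be the ℝ-linear map with a₁(1) = 1 and a₁(ζ^(q-1)) = ζ, where ζ = e^(πi/q), q ≥ 3. Then for every z in the open sector S(1, ζ^(q-1)) = {x₁·1 + x₂·ζ^(q-1) : x₁ > 0, x₂ > 0}, one has |a₁(z)| > |z|. -/

import Mathlib

theorem stmt_6 (q : ℕ) (hq : 3 ≤ q)
    (ζ : ℂ) (hζ : ζ = Complex.exp (Real.pi * Complex.I / q))
    (lam : ℝ) (hlam : lam = 2 * Real.cos (Real.pi / q))
    (a₁ : ℂ → ℂ)
    (ha₁ : ∀ x₁ x₂ : ℝ, a₁ ((x₁ : ℂ) + (x₂ : ℂ) * ζ ^ (q - 1)) =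
      ((x₁ + lam * x₂ : ℝ) : ℂ) + (x₂ : ℂ) * ζ ^ (q - 1)) :
    ∀ x₁ x₂ : ℝ, 0 < x₁ → 0 < x₂ →
      ‖(x₁ : ℂ) + (x₂ : ℂ) * ζ ^ (q - 1)‖ <
      ‖a₁ ((x₁ : ℂ) + (x₂ : ℂ) * ζ ^ (q - 1))‖ := by
  have hq0 : (q : ℝ) ≠ 0 := by positivity
  have hqC : (q : ℂ) ≠ 0 := by exact_mod_cast hq0
  have hw : ζ ^ (q - 1) = -Complex.exp (((-(Real.pi / q) : ℝ) : ℂ) * Complex.I) := by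
    rw [hζ, ← Complex.exp_nat_mul]
    have h1 : ((q - 1 : ℕ) : ℂ) = (q : ℂ) - 1 := by
      have : 1 ≤ q := by omega
      push_cast [this]; ring
    rw [h1]
    have h2 : ((q : ℂ) - 1) * (Real.pi * Complex.I / q) =
        Real.pi * Complex.I + ((-(Real.pi / q) : ℝ) : ℂ) * Complex.I := by
      push_cast
      field_simp
      ring
    rw [h2, Complex.exp_add, Complex.exp_pi_mul_I]
    ring
  have hre : (ζ ^ (q - 1)).re = -Real.cos (Real.pi / q) := by
    rw [hw, Complex.neg_re, Complex.exp_ofReal_mul_I_re, Real.cos_neg]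
  have hc : 0 < Real.cos (Real.pi / q) := by
    apply Real.cos_pos_of_mem_Ioo
    constructor
    · have : 0 < Real.pi / q := by positivity
      linarith [Real.pi_pos]
    · have h3 : (3 : ℝ) ≤ q := by exact_mod_cast hq
      have : Real.pi / q ≤ Real.pi / 3 := by
        apply div_le_div_of_nonneg_left Real.pi_pos.le (by norm_num) h3
      have h2 : Real.pi / 3 < Real.pi / 2 := by
        apply div_lt_div_of_pos_left Real.pi_pos <;> norm_num
      linarith
  intro x₁ x₂ hx₁ hx₂
  rw [ha₁]
  rw [Complex.norm_def, Complex.norm_def]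
  apply Real.sqrt_lt_sqrt (Complex.normSq_nonneg _)
  simp only [Complex.normSq_apply, Complex.add_re, Complex.add_im, Complex.ofReal_re,
    Complex.ofReal_im, Complex.mul_re, Complex.mul_im, hre, hlam]
  nlinarith [mul_pos hx₁ hx₂, mul_pos (mul_pos hx₁ hx₂) hc, sq_nonneg ((ζ ^ (q-1)).im)]
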